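/- Let p > 1 and λ ∈ ℝ. Let u ∈ C²([0,1]) satisfy u''(r) + (2/r) u'(r) + λ u(r) + u(r)|u(r)|^{p-1} = 0 for 0 < r < 1, with u'(0) = u(1) = 0, and let ψ ∈ C³([0,1]) with ψ(0) = 0. Then ∫₀¹ [ ((p+3)/(p+1)) ψ'(r) r² − (2(p−1)/(p+1)) ψ(r) r ] |u(r)|^{p+1} dr + (1/2) ∫₀¹ ( ψ'''(r) + 4λ ψ'(r) ) u(r)² r² dr = ψ(1) (u'(1))². -/

import Mathlib

open Set Real Topology Filter

lemma habs (p : ℝ) (hp : 1 < p) (x : ℝ) :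
    HasDerivAt (fun y : ℝ => |y| ^ (p+1)) ((p+1) * (x * |x| ^ (p-1))) x := by
  rcases lt_trichotomy x 0 with hx | hx | hx
  · have hne : (-x) ≠ 0 := by simp [hx.ne]
    have h1 : HasDerivAt (fun y : ℝ => (-y) ^ (p+1)) ((p+1) * (-x)^(p+1-1) * (-1)) x := by
      have := (Real.hasDerivAt_rpow_const (x := -x) (p := p+1) (Or.inl hne)).comp x (hasDerivAt_neg x)
      simpa [Function.comp_def] using this
    have h2 : HasDerivAt (fun y : ℝ => |y| ^ (p+1)) ((p+1) * (-x)^(p+1-1) * (-1)) x := by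
      apply h1.congr_of_eventuallyEq
      filter_upwards [eventually_lt_nhds hx] with y hy
      rw [abs_of_neg hy]
    convert h2 using 1
    rw [abs_of_neg hx]
    rw [show (-x) ^ (p+1-1) = (-x) ^ (p-1) * (-x) by rw [← Real.rpow_add_one hne]; ring_nf]
    ring
  · subst hx
    have h0 : (p+1) * ((0:ℝ) * |(0:ℝ)| ^ (p-1)) = 0 := by ring
    rw [h0, hasDerivAt_iff_tendsto_slope]
    have hb : ∀ᶠ y in 𝓝[≠] (0:ℝ), ‖slope (fun y : ℝ => |y| ^ (p+1)) 0 y‖ ≤ |y| ^ p := by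
      filter_upwards [self_mem_nhdsWithin] with y (hy : y ≠ 0)
      have hay : (0:ℝ) < |y| := abs_pos.2 hy
      have hs : slope (fun y : ℝ => |y| ^ (p+1)) 0 y = |y| ^ (p+1) / y := by
        simp [slope_def_field, Real.zero_rpow (by linarith : p+1 ≠ 0)]
      rw [hs]
      have : ‖|y| ^ (p+1) / y‖ = |y| ^ (p+1) / |y| := by
        rw [norm_div, Real.norm_eq_abs, Real.norm_eq_abs,
          abs_of_nonneg (Real.rpow_nonneg (abs_nonneg y) _)]
      rw [this, ← Real.rpow_sub_one hay.ne']
      ring_nf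
      exact le_refl _
    refine squeeze_zero_norm' hb ?_
    have hc : ContinuousAt (fun z : ℝ => z ^ p) 0 :=
      Real.continuousAt_rpow_const 0 p (Or.inr (by linarith))
    have habs0 : Tendsto (fun y : ℝ => |y|) (𝓝[≠] (0:ℝ)) (𝓝 0) := by
      simpa using ((continuous_abs.tendsto 0).mono_left (nhdsWithin_le_nhds (s := {(0:ℝ)}ᶜ)))
    have := hc.tendsto.comp habs0
    simpa [Function.comp_def, Real.zero_rpow (by linarith : p ≠ 0)] using this
  · have hne : x ≠ 0 := hx.ne'
    have h1 : HasDerivAt (fun y : ℝ => y ^ (p+1)) ((p+1) * x^(p+1-1)) x :=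
      Real.hasDerivAt_rpow_const (Or.inl hne)
    have h2 : HasDerivAt (fun y : ℝ => |y| ^ (p+1)) ((p+1) * x^(p+1-1)) x := by
      apply h1.congr_of_eventuallyEq
      filter_upwards [eventually_gt_nhds hx] with y hy
      rw [abs_of_pos hy]
    convert h2 using 1
    rw [abs_of_pos hx]
    rw [show x ^ (p+1-1) = x ^ (p-1) * x by rw [← Real.rpow_add_one hne]; ring_nf]
    ring

lemma habs2 (p : ℝ) (hp : 1 < p) (x : ℝ) : x * (x * |x| ^ (p-1)) = |x| ^ (p+1) := by
  rcases eq_or_ne x 0 with rfl | hx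
  · simp [Real.zero_rpow (by linarith : p+1 ≠ 0)]
  · have hax : (0:ℝ) < |x| := abs_pos.2 hx
    have : |x| ^ (p+1) = |x| ^ (p-1) * |x| ^ (2:ℕ) := by
      rw [← Real.rpow_natCast _ 2, ← Real.rpow_add hax]; ring_nf
    rw [this, pow_two, abs_mul_abs_self]; ring

/-- The Pohozhaev-type identity of Example 1: for `f(u) = λu + u|u|^{p-1}`
in dimension 3, a C² solution `u` of `u'' + (2/r)u' + λu + u|u|^{p-1} = 0`
on `(0,1)` with `u'(0) = u(1) = 0`, and any C³ function `ψ` with `ψ(0) = 0`,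
satisfy
`∫₀¹ [((p+3)/(p+1)) ψ' r² - (2(p-1)/(p+1)) ψ r] |u|^{p+1} dr
  + (1/2) ∫₀¹ (ψ''' + 4λψ') u² r² dr = ψ(1) u'(1)²`. -/
theorem pohozhaev_example1_identity
    (p : ℝ) (hp : 1 < p) (lam : ℝ)
    (u u' u'' : ℝ → ℝ)
    (hu : ∀ r ∈ Icc (0:ℝ) 1, HasDerivAt u (u' r) r)
    (hu' : ∀ r ∈ Icc (0:ℝ) 1, HasDerivAt u' (u'' r) r)
    (hu''c : ContinuousOn u'' (Icc (0:ℝ) 1))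
    (ψ ψ' ψ'' ψ''' : ℝ → ℝ)
    (hψ : ∀ r ∈ Icc (0:ℝ) 1, HasDerivAt ψ (ψ' r) r)
    (hψ' : ∀ r ∈ Icc (0:ℝ) 1, HasDerivAt ψ' (ψ'' r) r)
    (hψ'' : ∀ r ∈ Icc (0:ℝ) 1, HasDerivAt ψ'' (ψ''' r) r)
    (hψ'''c : ContinuousOn ψ''' (Icc (0:ℝ) 1))
    (hψ0 : ψ 0 = 0)
    (hode : ∀ r ∈ Ioo (0:ℝ) 1,
      u'' r + 2 / r * u' r + lam * u r + u r * |u r| ^ (p - 1) = 0)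
    (hbc0 : u' 0 = 0) (hbc1 : u 1 = 0) :
    (∫ r in (0:ℝ)..1,
        ((p + 3) / (p + 1) * ψ' r * r ^ 2
            - 2 * (p - 1) / (p + 1) * ψ r * r) * |u r| ^ (p + 1))
      + 1 / 2 * ∫ r in (0:ℝ)..1,
          (ψ''' r + 4 * lam * ψ' r) * (u r) ^ 2 * r ^ 2
      = ψ 1 * (u' 1) ^ 2 := by
  have hpne : p + 1 ≠ 0 := by linarith
  have hone01 : (0:ℝ) ≤ 1 := zero_le_one
  set G : ℝ → ℝ := fun s =>
    (p+1) * (ψ s * s^2 * u' s ^ 2 / 2)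
    + (p+1) * (lam * (ψ s * s^2 * u s ^ 2 / 2))
    + ψ s * s^2 * |u s| ^ (p+1)
    + (p+1) * ((s * ψ s - s^2 * ψ' s / 2) * (u s * u' s))
    - (p+1) * ((ψ s - s^2 * ψ'' s / 2) * u s ^ 2 / 2)
    + (p+1) * ((ψ s - s * ψ' s / 2) * u s ^ 2) with hGdef
  set D : ℝ → ℝ := fun r =>
    (p+1) * ((ψ' r * r^2 + 2*r*ψ r) * u' r ^ 2 / 2 + ψ r * r^2 * (u' r * u'' r))
    + (p+1) * lam * ((ψ' r * r^2 + 2*r*ψ r) * u r ^ 2 / 2 + ψ r * r^2 * (u r * u' r))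
    + (ψ' r * r^2 + 2*r*ψ r) * |u r| ^ (p+1)
    + (p+1) * (ψ r * r^2 * ((u r * |u r| ^ (p-1)) * u' r))
    + (p+1) * ((ψ r - r^2 * ψ'' r / 2) * (u r * u' r)
        + (r * ψ r - r^2 * ψ' r / 2) * (u' r ^ 2 + u r * u'' r))
    - (p+1) * ((ψ' r - (r * ψ'' r + r^2 * ψ''' r / 2)) * u r ^ 2 / 2
        + (ψ r - r^2 * ψ'' r / 2) * (u r * u' r))
    + (p+1) * ((ψ' r - (ψ' r + r * ψ'' r) / 2) * u r ^ 2
        + (ψ r - r * ψ' r / 2) * (2 * u r * u' r)) with hDdef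
  set g : ℝ → ℝ := fun r =>
    (p+1)/4 * ((ψ''' r + 4*lam*ψ' r) * u r ^ 2 * r^2)
    + ((p+3)/2 * ψ' r * r^2 - (p-1) * ψ r * r) * |u r| ^ (p+1) with hgdef
  -- derivative of G everywhere on [0,1]
  have HD : ∀ r ∈ Icc (0:ℝ) 1, HasDerivAt G (D r) r := by
    intro r hr
    have hur := hu r hr
    have hu'r := hu' r hr
    have hψr := hψ r hr
    have hψ'r := hψ' r hr
    have hψ''r := hψ'' r hr
    have hsq : HasDerivAt (fun s : ℝ => s^2) (2*r) r := by
      simpa using hasDerivAt_pow 2 r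
    have hidr : HasDerivAt (fun s : ℝ => s) 1 r := hasDerivAt_id r
    have hA : HasDerivAt (fun s => |u s| ^ (p+1)) (((p+1) * (u r * |u r| ^ (p-1))) * u' r) r :=
      (habs p hp (u r)).comp r hur
    have T1 := (((hψr.mul hsq).mul (hu'r.pow 2)).div_const 2).const_mul (p+1)
    have T2 := ((((hψr.mul hsq).mul (hur.pow 2)).div_const 2).const_mul lam).const_mul (p+1)
    have T3 := (hψr.mul hsq).mul hA
    have T4 := (((hidr.mul hψr).sub ((hsq.mul hψ'r).div_const 2)).mul (hur.mul hu'r)).const_mul (p+1)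
    have T5 := (((hψr.sub ((hsq.mul hψ''r).div_const 2)).mul (hur.pow 2)).div_const 2).const_mul (p+1)
    have T6 := ((hψr.sub ((hidr.mul hψ'r).div_const 2)).mul (hur.pow 2)).const_mul (p+1)
    have H0 := ((((T1.add T2).add T3).add T4).sub T5).add T6
    rw [hGdef]
    refine H0.congr_deriv ?_
    simp only [hDdef, Pi.mul_apply, Pi.pow_apply, Pi.sub_apply]
    push_cast
    ring
  -- on the open interval, D equals g via the ODE
  have Deq : ∀ r ∈ Ioo (0:ℝ) 1, D r = g r := by
    intro r hr
    have hr0 : r ≠ 0 := ne_of_gt hr.1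
    have h := hode r hr
    have h2r : r * u'' r + 2 * u' r + r * (lam * u r) + r * (u r * |u r| ^ (p-1)) = 0 := by
      have e : r * (2 / r * u' r) = 2 * u' r := by field_simp
      linear_combination r * h - e
    have key := habs2 p hp (u r)
    simp only [hDdef, hgdef]
    linear_combination ((p+1) * (ψ r * r * u' r + (ψ r - r * ψ' r / 2) * u r)) * h2r
      + ((p+1) * (r^2 * ψ' r / 2 - r * ψ r)) * key
  -- continuity facts
  have hcu : ContinuousOn u (Icc (0:ℝ) 1) :=
    fun x hx => (hu x hx).continuousAt.continuousWithinAt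
  have hcψ : ContinuousOn ψ (Icc (0:ℝ) 1) :=
    fun x hx => (hψ x hx).continuousAt.continuousWithinAt
  have hcψ' : ContinuousOn ψ' (Icc (0:ℝ) 1) :=
    fun x hx => (hψ' x hx).continuousAt.continuousWithinAt
  have hcA : ContinuousOn (fun r => |u r| ^ (p+1)) (Icc (0:ℝ) 1) :=
    (hcu.abs).rpow_const (fun x _ => Or.inr (by linarith))
  have hcid : ContinuousOn (fun x : ℝ => x) (Icc (0:ℝ) 1) := continuousOn_id
  have hcf1 : ContinuousOn (fun r =>
      ((p + 3) / (p + 1) * ψ' r * r ^ 2 - 2 * (p - 1) / (p + 1) * ψ r * r)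
        * |u r| ^ (p + 1)) (Icc (0:ℝ) 1) :=
    (((continuousOn_const.mul hcψ').mul (hcid.pow 2)).sub
      ((continuousOn_const.mul hcψ).mul hcid)).mul hcA
  have hcf2 : ContinuousOn (fun r =>
      (ψ''' r + 4 * lam * ψ' r) * (u r) ^ 2 * r ^ 2) (Icc (0:ℝ) 1) :=
    ((hψ'''c.add (continuousOn_const.mul hcψ')).mul (hcu.pow 2)).mul (hcid.pow 2)
  have hcg : ContinuousOn g (Icc (0:ℝ) 1) := by
    rw [hgdef]
    exact (continuousOn_const.mul
        (((hψ'''c.add (continuousOn_const.mul hcψ')).mul (hcu.pow 2)).mul (hcid.pow 2))).add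
      ((((continuousOn_const.mul hcψ').mul (hcid.pow 2)).sub
        ((continuousOn_const.mul hcψ).mul hcid)).mul hcA)
  have hgint : IntervalIntegrable g MeasureTheory.volume 0 1 :=
    hcg.intervalIntegrable_of_Icc hone01
  have hi1 : IntervalIntegrable (fun r =>
      ((p + 3) / (p + 1) * ψ' r * r ^ 2 - 2 * (p - 1) / (p + 1) * ψ r * r)
        * |u r| ^ (p + 1)) MeasureTheory.volume 0 1 :=
    hcf1.intervalIntegrable_of_Icc hone01
  have hi2 : IntervalIntegrable (fun r =>
      (ψ''' r + 4 * lam * ψ' r) * (u r) ^ 2 * r ^ 2) MeasureTheory.volume 0 1 :=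
    hcf2.intervalIntegrable_of_Icc hone01
  -- FTC
  have hcont : ContinuousOn G (Icc (0:ℝ) 1) :=
    fun x hx => (HD x hx).continuousAt.continuousWithinAt
  have hderiv : ∀ x ∈ Ioo (0:ℝ) 1, HasDerivWithinAt G (g x) (Ioi x) x := by
    intro x hx
    have hh := HD x (Ioo_subset_Icc_self hx)
    rw [Deq x hx] at hh
    exact hh.hasDerivWithinAt
  have hFTC := intervalIntegral.integral_eq_sub_of_hasDeriv_right_of_le hone01 hcont hderiv hgint
  have HG1 : G 1 = (p+1) * (ψ 1 * u' 1 ^ 2 / 2) := by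
    rw [hGdef]
    simp only [hbc1]
    simp [Real.zero_rpow hpne]
  have HG0 : G 0 = 0 := by
    rw [hGdef]
    simp [hψ0]
  rw [HG1, HG0, sub_zero] at hFTC
  -- split ∫ g into the two statement integrals
  have hpt : ∀ r, g r =
      (p+1)/2 * (((p + 3) / (p + 1) * ψ' r * r ^ 2
          - 2 * (p - 1) / (p + 1) * ψ r * r) * |u r| ^ (p + 1))
      + (p+1)/4 * ((ψ''' r + 4 * lam * ψ' r) * (u r) ^ 2 * r ^ 2) := by
    intro r
    rw [hgdef]
    field_simp
    ring
  have hsplit : (∫ r in (0:ℝ)..1, g r) =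
      (p+1)/2 * (∫ r in (0:ℝ)..1,
        ((p + 3) / (p + 1) * ψ' r * r ^ 2
          - 2 * (p - 1) / (p + 1) * ψ r * r) * |u r| ^ (p + 1))
      + (p+1)/4 * (∫ r in (0:ℝ)..1,
        (ψ''' r + 4 * lam * ψ' r) * (u r) ^ 2 * r ^ 2) := by
    rw [intervalIntegral.integral_congr (g := fun r =>
      (p+1)/2 * (((p + 3) / (p + 1) * ψ' r * r ^ 2
          - 2 * (p - 1) / (p + 1) * ψ r * r) * |u r| ^ (p + 1))
      + (p+1)/4 * ((ψ''' r + 4 * lam * ψ' r) * (u r) ^ 2 * r ^ 2))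
      (fun r _ => hpt r)]
    rw [intervalIntegral.integral_add (hi1.const_mul _) (hi2.const_mul _),
      intervalIntegral.integral_const_mul, intervalIntegral.integral_const_mul]
  rw [hsplit] at hFTC
  have h2ne : ((p+1)/2 : ℝ) ≠ 0 := div_ne_zero hpne two_ne_zero
  apply mul_left_cancel₀ h2ne
  linear_combination hFTC
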